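/- Let T be a pretriangulated category admitting countable coproducts, let φₙ : Xₙ → Xₙ₊₁ (n ∈ ℕ) be a sequence of morphisms in T such that each Xₙ is a coproduct of compact objects, and let X be an object fitting into a distinguished triangle ∐ₙ Xₙ →(1−φ) ∐ₙ Xₙ →π X →δ (∐ₙ Xₙ)[1]. Then a morphism f : X → Y in T is phantom if and only if f factors through the connecting morphism δ : X → (∐ₙ Xₙ)[1], i.e., f = δ ≫ h for some h : (∐ₙ Xₙ)[1] → Y. -/

import Mathlib

universe w v u

open CategoryTheory CategoryTheory.Limits CategoryTheory.Pretriangulated Opposite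

noncomputable section

variable {T : Type u} [Category.{v} T] [Preadditive T] [HasZeroObject T] [HasShift T ℤ]
  [∀ n : ℤ, (shiftFunctor T n).Additive] [Pretriangulated T] [HasCountableCoproducts T]

/-- An object `C` of `T` is compact if for every family `(Yᵢ)` of objects admitting a
coproduct, the canonical map `⊕ᵢ Hom(C, Yᵢ) → Hom(C, ∐ᵢ Yᵢ)` is bijective. -/
def IsCompactObject (C : T) : Prop :=
  ∀ (ι : Type w) (_ : DecidableEq ι) (Y : ι → T) (_ : HasCoproduct Y),
    Function.Bijective
      ⇑(DirectSum.toAddMonoid (fun i => Preadditive.rightComp C (Sigma.ι Y i)))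

/-- If `x = S x` where `S` is the "shift" endomorphism of a direct sum over `ℕ`, then `x = 0`. -/
lemma aux_shift_fixed_zero {M : ℕ → Type*} [∀ n, AddCommGroup (M n)]
    (ρ : ∀ n, M n →+ M (n + 1)) (x : DirectSum ℕ M)
    (hx : x = DirectSum.toAddMonoid (fun n => (DirectSum.of M (n + 1)).comp (ρ n)) x) :
    x = 0 := by
  set S := DirectSum.toAddMonoid (fun n => (DirectSum.of M (n + 1)).comp (ρ n)) with hS
  have h0 : ∀ y : DirectSum ℕ M, (S y) 0 = 0 := by
    intro y
    induction y using DirectSum.induction_on with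
    | zero => simp
    | of j m =>
      rw [hS, DirectSum.toAddMonoid_of]
      simp only [AddMonoidHom.coe_comp, Function.comp_apply]
      exact DirectSum.of_eq_of_ne _ _ _ (Nat.succ_ne_zero j).symm
    | add a b ha hb => rw [map_add, DFinsupp.add_apply, ha, hb, add_zero]
  have hsucc : ∀ (y : DirectSum ℕ M) (n : ℕ), (S y) (n + 1) = ρ n (y n) := by
    intro y
    induction y using DirectSum.induction_on with
    | zero => simp
    | of j m =>
      intro n
      rw [hS, DirectSum.toAddMonoid_of]
      simp only [AddMonoidHom.coe_comp, Function.comp_apply]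
      by_cases h : j = n
      · subst h
        simp [DirectSum.of_eq_same]
      · rw [DirectSum.of_eq_of_ne _ _ _ (by omega), DirectSum.of_eq_of_ne _ _ _ (Ne.symm h), map_zero]
    | add a b ha hb =>
      intro n
      rw [map_add, DFinsupp.add_apply, DFinsupp.add_apply, ha, hb, map_add]
  have hall : ∀ n, x n = 0 := by
    intro n
    induction n with
    | zero =>
      calc x 0 = (S x) 0 := by conv_lhs => rw [hx]
      _ = 0 := h0 x
    | succ n ih =>
      calc x (n + 1) = (S x) (n + 1) := by conv_lhs => rw [hx]
      _ = ρ n (x n) := hsucc x n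
      _ = 0 := by rw [ih, map_zero]
  exact DFinsupp.ext hall

/-- A compact object satisfies the defining bijectivity property also for `ℕ`-indexed
families. -/
lemma aux_compact_nat (C : T) (hC : IsCompactObject.{w} C) (Y : ℕ → T) [HasCoproduct Y] :
    Function.Bijective
      ⇑(DirectSum.toAddMonoid (fun n => Preadditive.rightComp C (Sigma.ι Y n))) := by
  classical
  let e : ULift.{w} ℕ ≃ ℕ := Equiv.ulift
  let Y' : ULift.{w} ℕ → T := fun i => Y i.down
  have hb := hC (ULift.{w} ℕ) inferInstance Y' inferInstance
  let t' := DirectSum.toAddMonoid (fun i => Preadditive.rightComp C (Sigma.ι Y' i))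
  let t := DirectSum.toAddMonoid (fun n => Preadditive.rightComp C (Sigma.ι Y n))
  let q : DirectSum ℕ (fun n => C ⟶ Y n) →+ DirectSum (ULift.{w} ℕ) (fun i => C ⟶ Y' i) :=
    DirectSum.toAddMonoid (fun n => DirectSum.of (fun i : ULift.{w} ℕ => C ⟶ Y' i) (ULift.up n))
  let q' : DirectSum (ULift.{w} ℕ) (fun i => C ⟶ Y' i) →+ DirectSum ℕ (fun n => C ⟶ Y n) :=
    DirectSum.toAddMonoid (fun i => DirectSum.of (fun n : ℕ => C ⟶ Y n) i.down)
  have hq1 : ∀ x, q' (q x) = x := by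
    intro x
    induction x using DirectSum.induction_on with
    | zero => simp
    | of n m =>
      rw [show q (DirectSum.of (fun n : ℕ => C ⟶ Y n) n m)
          = DirectSum.of (fun i : ULift.{w} ℕ => C ⟶ Y' i) (ULift.up n) m from
        DirectSum.toAddMonoid_of _ _ _]
      exact DirectSum.toAddMonoid_of _ _ _
    | add a b ha hb => rw [map_add, map_add, ha, hb]
  have hq2 : ∀ x, q (q' x) = x := by
    intro x
    induction x using DirectSum.induction_on with
    | zero => simp
    | of i m =>
      rw [show q' (DirectSum.of (fun i : ULift.{w} ℕ => C ⟶ Y' i) i m)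
          = DirectSum.of (fun n : ℕ => C ⟶ Y n) i.down m from DirectSum.toAddMonoid_of _ _ _]
      exact DirectSum.toAddMonoid_of _ _ _
    | add a b ha hb => rw [map_add, map_add, ha, hb]
  have hq : Function.Bijective ⇑q := Function.bijective_iff_has_inverse.2 ⟨⇑q', hq1, hq2⟩
  let r : (∐ Y') ≅ ∐ Y := Sigma.reindex e Y
  have hri : ∀ i : ULift.{w} ℕ, Sigma.ι Y' i ≫ r.hom = Sigma.ι Y i.down := fun i =>
    Sigma.ι_reindex_hom e Y i
  have hfun : ∀ x, t x = t' (q x) ≫ r.hom := by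
    intro x
    induction x using DirectSum.induction_on with
    | zero => simp
    | of n m =>
      rw [show t (DirectSum.of (fun n : ℕ => C ⟶ Y n) n m) = m ≫ Sigma.ι Y n from
          DirectSum.toAddMonoid_of _ _ _,
        show q (DirectSum.of (fun n : ℕ => C ⟶ Y n) n m)
          = DirectSum.of (fun i : ULift.{w} ℕ => C ⟶ Y' i) (ULift.up n) m from
          DirectSum.toAddMonoid_of _ _ _,
        show t' (DirectSum.of (fun i : ULift.{w} ℕ => C ⟶ Y' i) (ULift.up n) m)
          = m ≫ Sigma.ι Y' (ULift.up n) from DirectSum.toAddMonoid_of _ _ _,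
        Category.assoc, hri]
    | add a b ha hb =>
      rw [map_add, map_add, map_add, Preadditive.add_comp, ha, hb]
  have heq : ⇑t = (fun a : C ⟶ ∐ Y' => a ≫ r.hom) ∘ ⇑t' ∘ ⇑q := funext hfun
  have hr : Function.Bijective (fun a : C ⟶ ∐ Y' => a ≫ r.hom) :=
    Function.bijective_iff_has_inverse.2 ⟨fun a => a ≫ r.inv, fun a => by simp, fun a => by simp⟩
  show Function.Bijective ⇑t
  rw [heq]
  exact hr.comp (hb.comp hq)

/-- if `X` is a homotopy colimit of a sequence `(Xₙ)` of coproducts of compact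
objects, with connecting morphism `δ : X ⟶ (∐ₙ Xₙ)⟦1⟧`, then a morphism `f : X ⟶ Y` is
phantom if and only if it factors through `δ`. -/
theorem statement_10 (Xs : ℕ → T) (φ : ∀ n, Xs n ⟶ Xs (n + 1)) (X : T)
    (π : (∐ Xs) ⟶ X) (δ : X ⟶ (∐ Xs)⟦(1 : ℤ)⟧)
    (hT : Triangle.mk (Sigma.desc (fun n => Sigma.ι Xs n - φ n ≫ Sigma.ι Xs (n + 1))) π δ ∈
      (distTriang T))
    (hXs : ∀ n, ∃ (κ : Type w) (Z : κ → T) (_ : HasCoproduct Z),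
      (∀ k, IsCompactObject.{w} (Z k)) ∧ Nonempty (Xs n ≅ ∐ Z))
    (Y : T) (f : X ⟶ Y) :
    (∀ Cc : T, IsCompactObject.{w} Cc → ∀ g : Cc ⟶ X, g ≫ f = 0) ↔
      ∃ h : (∐ Xs)⟦(1 : ℤ)⟧ ⟶ Y, f = δ ≫ h := by
  constructor
  · intro H
    have hπf : π ≫ f = 0 := by
      apply Sigma.hom_ext
      intro n
      obtain ⟨κ, Z, hcop, hZ, ⟨e⟩⟩ := hXs n
      haveI := hcop
      have h2 : e.inv ≫ Sigma.ι Xs n ≫ π ≫ f = 0 := by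
        apply Sigma.hom_ext
        intro k
        simpa using H (Z k) (hZ k) (Sigma.ι Z k ≫ e.inv ≫ Sigma.ι Xs n ≫ π)
      have h3 : Sigma.ι Xs n ≫ π ≫ f = e.hom ≫ e.inv ≫ Sigma.ι Xs n ≫ π ≫ f := by simp
      rw [h3, h2, comp_zero, comp_zero]
    exact Triangle.yoneda_exact₃ _ hT f hπf
  · rintro ⟨h, rfl⟩ C hC g
    rw [← Category.assoc]
    suffices hz : g ≫ δ = 0 by rw [hz, zero_comp]
    set L : (∐ Xs) ⟶ ∐ Xs :=
      Sigma.desc (fun n => Sigma.ι Xs n - φ n ≫ Sigma.ι Xs (n + 1)) with hLdef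
    have hδL : δ ≫ (shiftFunctor T (1 : ℤ)).map L = 0 := comp_distTriang_mor_zero₃₁ _ hT
    let G := shiftFunctor T (1 : ℤ)
    let c : (∐ fun n => G.obj (Xs n)) ⟶ G.obj (∐ Xs) := sigmaComparison G Xs
    haveI : IsIso c := by dsimp only [c, G]; infer_instance
    let L' : (∐ fun n => G.obj (Xs n)) ⟶ ∐ fun n => G.obj (Xs n) :=
      Sigma.desc (fun n => Sigma.ι (fun n => G.obj (Xs n)) n -
        G.map (φ n) ≫ Sigma.ι (fun n => G.obj (Xs n)) (n + 1))
    have hcL : c ≫ G.map L = L' ≫ c := by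
      apply Sigma.hom_ext
      intro n
      rw [← Category.assoc, ← Category.assoc]
      rw [show Sigma.ι (fun n => G.obj (Xs n)) n ≫ c = G.map (Sigma.ι Xs n) from
        ι_comp_sigmaComparison G Xs n]
      rw [show Sigma.ι (fun n => G.obj (Xs n)) n ≫ L' =
        Sigma.ι (fun n => G.obj (Xs n)) n - G.map (φ n) ≫ Sigma.ι (fun n => G.obj (Xs n)) (n + 1)
        from Sigma.ι_desc _ _]
      rw [← G.map_comp, hLdef, Sigma.ι_desc, Functor.map_sub, G.map_comp,
        Preadditive.sub_comp, Category.assoc,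
        ι_comp_sigmaComparison G Xs n, ι_comp_sigmaComparison G Xs (n + 1)]
    let v : C ⟶ ∐ fun n => G.obj (Xs n) := (g ≫ δ) ≫ inv c
    have hvc : v ≫ c = g ≫ δ := by simp [v]
    have hvL : v ≫ L' = 0 := by
      have h4 : (v ≫ L') ≫ c = 0 ≫ c := by
        rw [Category.assoc, ← hcL, ← Category.assoc, hvc, Category.assoc, hδL,
          comp_zero, zero_comp]
      exact (cancel_mono c).1 h4
    have hb := aux_compact_nat.{w} C hC (fun n => G.obj (Xs n))
    obtain ⟨x, hx⟩ := hb.2 v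
    let t := DirectSum.toAddMonoid
      (fun n => Preadditive.rightComp C (Sigma.ι (fun n => G.obj (Xs n)) n))
    let ρ : ∀ n, (C ⟶ G.obj (Xs n)) →+ (C ⟶ G.obj (Xs (n + 1))) :=
      fun n => Preadditive.rightComp C (G.map (φ n))
    let S := DirectSum.toAddMonoid
      (fun n => (DirectSum.of (fun n => C ⟶ G.obj (Xs n)) (n + 1)).comp (ρ n))
    have key : ∀ y, t y ≫ L' = t y - t (S y) := by
      intro y
      induction y using DirectSum.induction_on with
      | zero => simp
      | of n m =>
        rw [show t (DirectSum.of (fun n => C ⟶ G.obj (Xs n)) n m)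
            = m ≫ Sigma.ι (fun n => G.obj (Xs n)) n from DirectSum.toAddMonoid_of _ _ _,
          show S (DirectSum.of (fun n => C ⟶ G.obj (Xs n)) n m)
            = DirectSum.of (fun n => C ⟶ G.obj (Xs n)) (n + 1) (m ≫ G.map (φ n)) from
            DirectSum.toAddMonoid_of _ _ _,
          show t (DirectSum.of (fun n => C ⟶ G.obj (Xs n)) (n + 1) (m ≫ G.map (φ n)))
            = (m ≫ G.map (φ n)) ≫ Sigma.ι (fun n => G.obj (Xs n)) (n + 1) from
            DirectSum.toAddMonoid_of _ _ _,
          Category.assoc,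
          show Sigma.ι (fun n => G.obj (Xs n)) n ≫ L' =
            Sigma.ι (fun n => G.obj (Xs n)) n -
              G.map (φ n) ≫ Sigma.ι (fun n => G.obj (Xs n)) (n + 1) from Sigma.ι_desc _ _,
          Preadditive.comp_sub, ← Category.assoc]
      | add a b ha hb =>
        rw [map_add, Preadditive.add_comp, ha, hb, map_add, map_add]
        abel
    have h5 : t x - t (S x) = 0 := by rw [← key x, hx, hvL]
    have h6 : x = S x := hb.1 (sub_eq_zero.1 h5)
    have h7 : x = 0 := aux_shift_fixed_zero ρ x h6
    have h8 : v = 0 := by rw [← hx, h7, map_zero]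
    rw [← hvc, h8, zero_comp]

end
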